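/- For every l > 0 and every C₂ > 0, there exist constants β > 0 and C' > 0 such that for all x ∈ (0, 1): setting ε = x^β, one has C₁ * ε^(N₁) + C₁ * ε^(-N₂) * exp(C₂ / (log ε * x^(1/n))) ≤ C' * x^l, where N₁, N₂, n, C₁ > 0 are fixed. (Note log ε < 0 so the exponent is negative; the claim expresses that exponential decay dominates polynomial growth.) -/

import Mathlib

/-- Exponential decay dominates polynomial growth: for fixed `N₁, N₂, C₁ > 0`
and `n ≥ 1`, for every `l > 0` and `C₂ > 0` there are `β > 0` and `C' > 0` such
that for all `x ∈ (0,1)`, with `ε = x^β`,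
`C₁ ε^{N₁} + C₁ ε^{-N₂} exp(C₂ / (log ε · x^{1/n})) ≤ C' x^l`. -/
theorem stmt_3 (N₁ N₂ C₁ : ℝ) (n : ℕ) (hN₁ : 0 < N₁) (hN₂ : 0 < N₂)
    (hC₁ : 0 < C₁) (hn : 1 ≤ n) :
    ∀ l > (0 : ℝ), ∀ C₂ > (0 : ℝ), ∃ β > (0 : ℝ), ∃ C' > (0 : ℝ),
      ∀ x ∈ Set.Ioo (0 : ℝ) 1,
        C₁ * (x ^ β) ^ N₁ +
          C₁ * (x ^ β) ^ (-N₂) *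
            Real.exp (C₂ / (Real.log (x ^ β) * x ^ ((1 : ℝ) / n))) ≤
        C' * x ^ l := by
  intro l hl C₂ hC₂
  have hn0 : (0:ℝ) < (n:ℝ) := by exact_mod_cast Nat.lt_of_lt_of_le Nat.zero_lt_one hn
  set β := l / N₁ with hβdef
  have hβ : 0 < β := div_pos hl hN₁
  set a := C₂ / (6 * (n:ℝ)^3 * β) with hadef
  have ha : 0 < a := by positivity
  set b := l + β * N₂ with hbdef
  have hb : 0 < b := by positivity
  refine ⟨β, hβ, C₁ + C₁ * Real.exp (b^2/(4*a)), by positivity, ?_⟩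
  rintro x ⟨hx0, hx1⟩
  set t := -Real.log x with htdef
  have ht : 0 < t := by
    have := Real.log_neg hx0 hx1; linarith
  have hlogx : Real.log x = -t := by simp [htdef]
  have hxr : ∀ r : ℝ, x ^ r = Real.exp (-(r * t)) := by
    intro r
    rw [Real.rpow_def_of_pos hx0, hlogx]; ring_nf
  have hβN₁ : β * N₁ = l := div_mul_cancel₀ l hN₁.ne'
  have h1 : (x ^ β) ^ N₁ = x ^ l := by
    rw [← Real.rpow_mul hx0.le, hβN₁]
  have h2 : (x ^ β) ^ (-N₂) = Real.exp (β * N₂ * t) := by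
    rw [← Real.rpow_mul hx0.le, hxr]; ring_nf
  have hlog : Real.log (x ^ β) = -(β * t) := by
    rw [Real.log_rpow hx0, hlogx]; ring
  -- rewrite the argument of exp
  have hexpne : Real.exp (-(1 / (n:ℝ) * t)) ≠ 0 := (Real.exp_pos _).ne'
  have harg : C₂ / (Real.log (x ^ β) * x ^ ((1 : ℝ) / n))
      = -(C₂ * Real.exp (1 / (n:ℝ) * t) / (β * t)) := by
    have he : Real.exp (1 / (n:ℝ) * t) ≠ 0 := (Real.exp_pos _).ne'
    have hbt : β * t ≠ 0 := by positivity
    rw [hlog, hxr, Real.exp_neg]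
    field_simp
  -- the key inequality
  have hkey : b * t ≤ b ^ 2 / (4 * a) + C₂ * Real.exp (1 / (n:ℝ) * t) / (β * t) := by
    have hexp3 : t ^ 3 / (6 * (n:ℝ)^3) ≤ Real.exp (1 / (n:ℝ) * t) := by
      have h := Real.pow_div_factorial_le_exp (x := 1 / (n:ℝ) * t)
        (by positivity) 3
      have hfac : ((Nat.factorial 3 : ℕ) : ℝ) = 6 := by norm_num [Nat.factorial]
      rw [hfac] at h
      have heq : (1 / (n:ℝ) * t) ^ 3 / 6 = t ^ 3 / (6 * (n:ℝ)^3) := by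
        field_simp
      rwa [heq] at h
    have hterm : a * t ^ 2 ≤ C₂ * Real.exp (1 / (n:ℝ) * t) / (β * t) := by
      rw [le_div_iff₀ (by positivity), hadef]
      calc C₂ / (6 * (n:ℝ)^3 * β) * t ^ 2 * (β * t)
          = C₂ * (t ^ 3 / (6 * (n:ℝ)^3)) := by field_simp
        _ ≤ C₂ * Real.exp (1 / (n:ℝ) * t) := by
            exact mul_le_mul_of_nonneg_left hexp3 hC₂.le
    have hquad : b * t - a * t ^ 2 ≤ b ^ 2 / (4 * a) := by
      rw [le_div_iff₀ (by positivity : (0:ℝ) < 4 * a)]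
      nlinarith [sq_nonneg (b - 2 * a * t)]
    linarith
  -- assemble
  rw [h1, h2, harg]
  have hx_l : x ^ l = Real.exp (-(l * t)) := hxr l
  rw [hx_l]
  have hmain : C₁ * Real.exp (β * N₂ * t) * Real.exp (-(C₂ * Real.exp (1 / (n:ℝ) * t) / (β * t)))
      ≤ C₁ * Real.exp (b ^ 2 / (4 * a)) * Real.exp (-(l * t)) := by
    have hle : β * N₂ * t + -(C₂ * Real.exp (1 / (n:ℝ) * t) / (β * t))
        ≤ b ^ 2 / (4 * a) + -(l * t) := by
      have : β * N₂ * t = b * t - l * t := by rw [hbdef]; ring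
      linarith [hkey]
    calc C₁ * Real.exp (β * N₂ * t) * Real.exp (-(C₂ * Real.exp (1 / (n:ℝ) * t) / (β * t)))
        = C₁ * Real.exp (β * N₂ * t + -(C₂ * Real.exp (1 / (n:ℝ) * t) / (β * t))) := by
          rw [Real.exp_add]; ring
      _ ≤ C₁ * Real.exp (b ^ 2 / (4 * a) + -(l * t)) :=
          mul_le_mul_of_nonneg_left (Real.exp_le_exp.mpr hle) hC₁.le
      _ = C₁ * Real.exp (b ^ 2 / (4 * a)) * Real.exp (-(l * t)) := by
          rw [Real.exp_add]; ring
  nlinarith [Real.exp_pos (-(l * t)), hmain]
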